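/- Let g ≥ 2, d ≥ 1, l ≥ 0, m ≥ 0 be integers with l + m ≤ g. For every natural number k, define R_{k,m,l} ∈ ℚ[α, β, γ] by R_{k,m,l} = ∑ (g−l−c)! · α^a/a! · β^b/b! · (2γ)^c/c!, where the sum runs over all triples (a, b, c) ∈ ℕ³ with b + c = m and a + b + 2c = k − g − l (the empty sum being 0). Then the following two identities hold in ℚ[α, β, γ]: (1) ( −α·∂²/∂α² + (g+2d−1−l)·∂/∂α − 2γ·∂²/∂α∂γ + (1/2)·βγ·∂²/∂γ² − ((g−l)/2)·β·∂/∂γ )(R_{k,m,l}) = (2g+2d−k) · R_{k−1,m,l}; and (2) ( −β·∂²/∂β² + (g+2d−1−l)·∂/∂β − 2γ·∂²/∂β∂γ + (1/2)·αγ·∂²/∂γ² − ((g−l)/2)·α·∂/∂γ )(R_{k,m,l}) = (2g+2d−k) · R_{k−1,m−1,l} (where R_{k−1,m−1,l} = 0 when m = 0). -/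
import Mathlib


/-!
Statement 15: the action of the (restrictions of the) deformed lowering operators `f_α^d`, `f_β^d`
on the invariant relations `R_{k,m,l} ∈ ℚ[α, β, γ]` (the computational core of Theorem 5.11 of
the paper).  We model `ℚ[α, β, γ]` as `MvPolynomial (Fin 3) ℚ` with `α = X 0`, `β = X 1`,
`γ = X 2`.  The condition `a + b + 2c = k − g − l` (as integers) is encoded as
`a + b + 2c + g + l = k` over the natural numbers.
-/

open MvPolynomial

noncomputable section

/-- The polynomial ring `ℚ[α, β, γ]`. -/
abbrev PolyABG : Type := MvPolynomial (Fin 3) ℚ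

/-- The polynomial `R_{k,m,l} = ∑_{b+c=m, a+b+2c=k−g−l} (g−l−c)! (α^a/a!) (β^b/b!) ((2γ)^c/c!)`. -/
def Rpoly (g l k m : ℕ) : PolyABG :=
  ∑ t ∈ (Finset.range (k + 1) ×ˢ Finset.range (k + 1) ×ˢ Finset.range (k + 1)).filter
      (fun t => t.2.1 + t.2.2 = m ∧ t.1 + t.2.1 + 2 * t.2.2 + g + l = k),
    (((g - l - t.2.2).factorial : ℚ) /
        ((t.1.factorial : ℚ) * (t.2.1.factorial : ℚ) * (t.2.2.factorial : ℚ))) •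
      (X 0 ^ t.1 * X 1 ^ t.2.1 * (2 * X 2) ^ t.2.2)

namespace Stmt15Aux

/-- The exponent vector of `α^a β^b γ^c`. -/
def e (a b c : ℕ) : Fin 3 →₀ ℕ :=
  Finsupp.single 0 a + Finsupp.single 1 b + Finsupp.single 2 c

@[simp] lemma e_apply0 (a b c : ℕ) : e a b c 0 = a := by
  simp [e, Finsupp.single_apply]
@[simp] lemma e_apply1 (a b c : ℕ) : e a b c 1 = b := by
  simp [e, Finsupp.single_apply]
@[simp] lemma e_apply2 (a b c : ℕ) : e a b c 2 = c := by
  simp [e, Finsupp.single_apply]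

lemma e_sub0 (a b c : ℕ) : e a b c - Finsupp.single 0 1 = e (a-1) b c := by
  ext i; fin_cases i <;> simp [e, Finsupp.tsub_apply, Finsupp.single_apply]
lemma e_sub1 (a b c : ℕ) : e a b c - Finsupp.single 1 1 = e a (b-1) c := by
  ext i; fin_cases i <;> simp [e, Finsupp.tsub_apply, Finsupp.single_apply]
lemma e_sub2 (a b c : ℕ) : e a b c - Finsupp.single 2 1 = e a b (c-1) := by
  ext i; fin_cases i <;> simp [e, Finsupp.tsub_apply, Finsupp.single_apply]

lemma e_add0 (a b c : ℕ) : Finsupp.single 0 1 + e a b c = e (a+1) b c := by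
  ext i; fin_cases i <;> simp [e, Finsupp.single_apply, Nat.add_comm]
lemma e_add1 (a b c : ℕ) : Finsupp.single 1 1 + e a b c = e a (b+1) c := by
  ext i; fin_cases i <;> simp [e, Finsupp.single_apply, Nat.add_comm]
lemma e_add2 (a b c : ℕ) : Finsupp.single 2 1 + e a b c = e a b (c+1) := by
  ext i; fin_cases i <;> simp [e, Finsupp.single_apply, Nat.add_comm]

def N (v : Fin 3 →₀ ℕ) : PolyABG := monomial v 1

lemma mono_eq_smul_N (v : Fin 3 →₀ ℕ) (x : ℚ) : (monomial v x : PolyABG) = x • N v := by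
  rw [N, smul_monomial, smul_eq_mul, mul_one]

lemma X_mul_mono (i : Fin 3) (s : Fin 3 →₀ ℕ) (q : ℚ) :
    (X i : PolyABG) * monomial s q = monomial (Finsupp.single i 1 + s) q := by
  rw [X, monomial_mul, one_mul]

lemma term_eq (a b c : ℕ) (q : ℚ) :
    q • ((X 0 : PolyABG) ^ a * X 1 ^ b * (2 * X 2) ^ c) = monomial (e a b c) (q * 2 ^ c) := by
  have h2 : (2 : PolyABG) = C 2 := by rw [← map_ofNat C 2]
  rw [mul_pow, h2, ← C_pow, X_pow_eq_monomial, X_pow_eq_monomial, X_pow_eq_monomial,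
    monomial_mul, C_mul_monomial, monomial_mul, smul_monomial]
  simp [e, mul_comm, add_assoc]

/-- The index set of `Rpoly`. -/
def S (g l k m : ℕ) : Finset (ℕ × ℕ × ℕ) :=
  (Finset.range (k + 1) ×ˢ Finset.range (k + 1) ×ˢ Finset.range (k + 1)).filter
    (fun t => t.2.1 + t.2.2 = m ∧ t.1 + t.2.1 + 2 * t.2.2 + g + l = k)

lemma mem_S {g l k m : ℕ} {t : ℕ × ℕ × ℕ} :
    t ∈ S g l k m ↔ t.2.1 + t.2.2 = m ∧ t.1 + t.2.1 + 2 * t.2.2 + g + l = k := by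
  simp only [S, Finset.mem_filter, Finset.mem_product, Finset.mem_range]
  omega

/-- The coefficient of the monomial `α^a β^b γ^c` in `Rpoly`. -/
def co (g l : ℕ) (t : ℕ × ℕ × ℕ) : ℚ :=
  ((g - l - t.2.2).factorial : ℚ) * 2 ^ t.2.2 /
    ((t.1.factorial : ℚ) * (t.2.1.factorial : ℚ) * (t.2.2.factorial : ℚ))

lemma Rpoly_eq (g l k m : ℕ) :
    Rpoly g l k m = ∑ t ∈ S g l k m, monomial (e t.1 t.2.1 t.2.2) (co g l t) := by
  refine Finset.sum_congr rfl fun t _ => ?_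
  rw [term_eq]
  congr 1
  rw [co]
  ring

/-- the `f_α` operator applied to a monomial. -/
lemma opA_mono (G h : ℚ) (a b c : ℕ) (q : ℚ) :
    -(X 0 * pderiv 0 (pderiv 0 (monomial (e a b c) q : PolyABG)))
        + G • pderiv 0 (monomial (e a b c) q : PolyABG)
        - 2 * (X 2 * pderiv 0 (pderiv 2 (monomial (e a b c) q : PolyABG)))
        + (1 / 2 : ℚ) • (X 1 * X 2 * pderiv 2 (pderiv 2 (monomial (e a b c) q : PolyABG)))
        - h • (X 1 * pderiv 2 (monomial (e a b c) q : PolyABG))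
      = monomial (e (a-1) b c) (q * a * (G - (a:ℚ) + 1 - 2*c))
        + monomial (e a (b+1) (c-1)) (q * c * (((c:ℚ) - 1)/2 - h)) := by
  have two_mul : ∀ (s : Fin 3 →₀ ℕ) (q : ℚ), (2 : PolyABG) * monomial s q = monomial s (2*q) := by
    intro s q; rw [← map_ofNat C 2, C_mul_monomial]
  simp only [pderiv_monomial, e_sub0, e_sub1, e_sub2, e_apply0, e_apply1, e_apply2, mul_assoc,
    X_mul_mono, e_add0, e_add1, e_add2, smul_monomial, two_mul]
  rcases a with _|_|a <;> rcases c with _|_|c <;> push_cast <;> norm_num <;>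
    simp only [mono_eq_smul_N] <;> module

/-- the `f_β` operator applied to a monomial. -/
lemma opB_mono (G h : ℚ) (a b c : ℕ) (q : ℚ) :
    -(X 1 * pderiv 1 (pderiv 1 (monomial (e a b c) q : PolyABG)))
        + G • pderiv 1 (monomial (e a b c) q : PolyABG)
        - 2 * (X 2 * pderiv 1 (pderiv 2 (monomial (e a b c) q : PolyABG)))
        + (1 / 2 : ℚ) • (X 0 * X 2 * pderiv 2 (pderiv 2 (monomial (e a b c) q : PolyABG)))
        - h • (X 0 * pderiv 2 (monomial (e a b c) q : PolyABG))
      = monomial (e a (b-1) c) (q * b * (G - (b:ℚ) + 1 - 2*c))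
        + monomial (e (a+1) b (c-1)) (q * c * (((c:ℚ) - 1)/2 - h)) := by
  have two_mul : ∀ (s : Fin 3 →₀ ℕ) (q : ℚ), (2 : PolyABG) * monomial s q = monomial s (2*q) := by
    intro s q; rw [← map_ofNat C 2, C_mul_monomial]
  simp only [pderiv_monomial, e_sub0, e_sub1, e_sub2, e_apply0, e_apply1, e_apply2, mul_assoc,
    X_mul_mono, e_add0, e_add1, e_add2, smul_monomial, two_mul]
  rcases b with _|_|b <;> rcases c with _|_|c <;> push_cast <;> norm_num <;>
    simp only [mono_eq_smul_N] <;> module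

lemma fact_ne (n : ℕ) : ((n.factorial : ℚ)) ≠ 0 := by
  exact_mod_cast n.factorial_ne_zero

/-- reindexing the `α`-part of the first operator. -/
lemma sumA (g l k m : ℕ) (hg : 2 ≤ g) (G : ℚ) :
    ∑ t ∈ S g l k m,
        monomial (e (t.1-1) t.2.1 t.2.2) (co g l t * t.1 * (G - (t.1:ℚ) + 1 - 2*t.2.2))
      = ∑ t ∈ S g l (k-1) m,
          monomial (e t.1 t.2.1 t.2.2) (co g l t * (G - (t.1:ℚ) - 2*t.2.2)) := by
  rw [← Finset.sum_filter_of_ne (p := fun t => t.1 ≠ 0)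
    (fun t _ hne h0 => by apply hne; rw [h0]; simp)]
  refine Finset.sum_nbij' (fun t => (t.1 - 1, t.2.1, t.2.2)) (fun t => (t.1 + 1, t.2.1, t.2.2))
    ?_ ?_ ?_ ?_ ?_
  · rintro ⟨a, b, c⟩ ht
    simp only [Finset.mem_filter, mem_S, Prod.mk.injEq, ne_eq, and_true, true_and] at ht ⊢
    omega
  · rintro ⟨a, b, c⟩ ht
    simp only [Finset.mem_filter, mem_S, Prod.mk.injEq, ne_eq, and_true, true_and] at ht ⊢
    omega
  · rintro ⟨a, b, c⟩ ht
    simp only [Finset.mem_filter, mem_S, Prod.mk.injEq, ne_eq, and_true, true_and] at ht ⊢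
    omega
  · rintro ⟨a, b, c⟩ ht
    simp only [Finset.mem_filter, mem_S, Prod.mk.injEq, ne_eq, and_true, true_and] at ht ⊢
    omega
  · rintro ⟨a, b, c⟩ ht
    simp only [Finset.mem_filter, mem_S] at ht
    obtain ⟨a, rfl⟩ : ∃ a', a = a' + 1 := ⟨a - 1, by omega⟩
    simp only [Nat.add_sub_cancel]
    congr 1
    simp only [co, Nat.factorial_succ]
    push_cast
    have h1 := fact_ne a
    have h2 := fact_ne b
    have h3 := fact_ne c
    have h4 : ((a : ℚ) + 1) ≠ 0 := by positivity
    field_simp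
    ring

/-- reindexing the `γ`-part of the first operator. -/
lemma sumB (g l k m : ℕ) (hg : 2 ≤ g) (hlm : l + m ≤ g) :
    ∑ t ∈ S g l k m,
        monomial (e t.1 (t.2.1+1) (t.2.2-1))
          (co g l t * t.2.2 * (((t.2.2:ℚ) - 1)/2 - ((g:ℚ) - (l:ℚ))/2))
      = ∑ t ∈ S g l (k-1) m, monomial (e t.1 t.2.1 t.2.2) (co g l t * (-(t.2.1:ℚ))) := by
  rw [← Finset.sum_filter_of_ne (p := fun t => t.2.2 ≠ 0)
    (fun t _ hne h0 => by apply hne; rw [h0]; simp),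
    ← Finset.sum_filter_of_ne (s := S g l (k-1) m) (p := fun t => t.2.1 ≠ 0)
    (fun t _ hne h0 => by apply hne; rw [h0]; simp)]
  refine Finset.sum_nbij' (fun t => (t.1, t.2.1 + 1, t.2.2 - 1))
    (fun t => (t.1, t.2.1 - 1, t.2.2 + 1)) ?_ ?_ ?_ ?_ ?_
  · rintro ⟨a, b, c⟩ ht
    simp only [Finset.mem_filter, mem_S, Prod.mk.injEq, ne_eq, and_true, true_and] at ht ⊢
    omega
  · rintro ⟨a, b, c⟩ ht
    simp only [Finset.mem_filter, mem_S, Prod.mk.injEq, ne_eq, and_true, true_and] at ht ⊢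
    omega
  · rintro ⟨a, b, c⟩ ht
    simp only [Finset.mem_filter, mem_S, Prod.mk.injEq, ne_eq, and_true, true_and] at ht ⊢
    omega
  · rintro ⟨a, b, c⟩ ht
    simp only [Finset.mem_filter, mem_S, Prod.mk.injEq, ne_eq, and_true, true_and] at ht ⊢
    omega
  · rintro ⟨a, b, c⟩ ht
    simp only [Finset.mem_filter, mem_S] at ht
    obtain ⟨c, rfl⟩ : ∃ c', c = c' + 1 := ⟨c - 1, by omega⟩
    obtain ⟨u, hu⟩ : ∃ u, g = l + c + 1 + u := ⟨g - l - c - 1, by omega⟩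
    simp only [Nat.add_sub_cancel]
    congr 1
    have e1 : g - l - (c + 1) = u := by omega
    have e2 : g - l - c = u + 1 := by omega
    have hgq : (g : ℚ) = (l : ℚ) + c + 1 + u := by exact_mod_cast congrArg (Nat.cast : ℕ → ℚ) hu
    simp only [co, e1, e2, Nat.factorial_succ]
    push_cast
    rw [hgq]
    have h1 := fact_ne a
    have h2 := fact_ne b
    have h3 := fact_ne c
    have h5 := fact_ne u
    have h4 : ((c : ℚ) + 1) ≠ 0 := by positivity
    have h6 : ((b : ℚ) + 1) ≠ 0 := by positivity
    field_simp
    ring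

/-- reindexing the `β`-part of the second operator. -/
lemma sumA' (g l k m : ℕ) (hg : 2 ≤ g) (hm : 1 ≤ m) (G : ℚ) :
    ∑ t ∈ S g l k m,
        monomial (e t.1 (t.2.1-1) t.2.2) (co g l t * t.2.1 * (G - (t.2.1:ℚ) + 1 - 2*t.2.2))
      = ∑ t ∈ S g l (k-1) (m-1),
          monomial (e t.1 t.2.1 t.2.2) (co g l t * (G - (t.2.1:ℚ) - 2*t.2.2)) := by
  rw [← Finset.sum_filter_of_ne (p := fun t => t.2.1 ≠ 0)
    (fun t _ hne h0 => by apply hne; rw [h0]; simp)]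
  refine Finset.sum_nbij' (fun t => (t.1, t.2.1 - 1, t.2.2)) (fun t => (t.1, t.2.1 + 1, t.2.2))
    ?_ ?_ ?_ ?_ ?_
  · rintro ⟨a, b, c⟩ ht
    simp only [Finset.mem_filter, mem_S, Prod.mk.injEq, ne_eq, and_true, true_and] at ht ⊢
    omega
  · rintro ⟨a, b, c⟩ ht
    simp only [Finset.mem_filter, mem_S, Prod.mk.injEq, ne_eq, and_true, true_and] at ht ⊢
    omega
  · rintro ⟨a, b, c⟩ ht
    simp only [Finset.mem_filter, mem_S, Prod.mk.injEq, ne_eq, and_true, true_and] at ht ⊢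
    omega
  · rintro ⟨a, b, c⟩ ht
    simp only [Finset.mem_filter, mem_S, Prod.mk.injEq, ne_eq, and_true, true_and] at ht ⊢
    omega
  · rintro ⟨a, b, c⟩ ht
    simp only [Finset.mem_filter, mem_S] at ht
    obtain ⟨b, rfl⟩ : ∃ b', b = b' + 1 := ⟨b - 1, by omega⟩
    simp only [Nat.add_sub_cancel]
    congr 1
    simp only [co, Nat.factorial_succ]
    push_cast
    have h1 := fact_ne a
    have h2 := fact_ne b
    have h3 := fact_ne c
    have h4 : ((b : ℚ) + 1) ≠ 0 := by positivity
    field_simp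
    ring

/-- reindexing the `γ`-part of the second operator. -/
lemma sumB' (g l k m : ℕ) (hg : 2 ≤ g) (hm : 1 ≤ m) (hlm : l + m ≤ g) :
    ∑ t ∈ S g l k m,
        monomial (e (t.1+1) t.2.1 (t.2.2-1))
          (co g l t * t.2.2 * (((t.2.2:ℚ) - 1)/2 - ((g:ℚ) - (l:ℚ))/2))
      = ∑ t ∈ S g l (k-1) (m-1), monomial (e t.1 t.2.1 t.2.2) (co g l t * (-(t.1:ℚ))) := by
  rw [← Finset.sum_filter_of_ne (p := fun t => t.2.2 ≠ 0)
    (fun t _ hne h0 => by apply hne; rw [h0]; simp),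
    ← Finset.sum_filter_of_ne (s := S g l (k-1) (m-1)) (p := fun t => t.1 ≠ 0)
    (fun t _ hne h0 => by apply hne; rw [h0]; simp)]
  refine Finset.sum_nbij' (fun t => (t.1 + 1, t.2.1, t.2.2 - 1))
    (fun t => (t.1 - 1, t.2.1, t.2.2 + 1)) ?_ ?_ ?_ ?_ ?_
  · rintro ⟨a, b, c⟩ ht
    simp only [Finset.mem_filter, mem_S, Prod.mk.injEq, ne_eq, and_true, true_and] at ht ⊢
    omega
  · rintro ⟨a, b, c⟩ ht
    simp only [Finset.mem_filter, mem_S, Prod.mk.injEq, ne_eq, and_true, true_and] at ht ⊢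
    omega
  · rintro ⟨a, b, c⟩ ht
    simp only [Finset.mem_filter, mem_S, Prod.mk.injEq, ne_eq, and_true, true_and] at ht ⊢
    omega
  · rintro ⟨a, b, c⟩ ht
    simp only [Finset.mem_filter, mem_S, Prod.mk.injEq, ne_eq, and_true, true_and] at ht ⊢
    omega
  · rintro ⟨a, b, c⟩ ht
    simp only [Finset.mem_filter, mem_S] at ht
    obtain ⟨c, rfl⟩ : ∃ c', c = c' + 1 := ⟨c - 1, by omega⟩
    obtain ⟨u, hu⟩ : ∃ u, g = l + c + 1 + u := ⟨g - l - c - 1, by omega⟩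
    simp only [Nat.add_sub_cancel]
    congr 1
    have e1 : g - l - (c + 1) = u := by omega
    have e2 : g - l - c = u + 1 := by omega
    have hgq : (g : ℚ) = (l : ℚ) + c + 1 + u := by exact_mod_cast congrArg (Nat.cast : ℕ → ℚ) hu
    simp only [co, e1, e2, Nat.factorial_succ]
    push_cast
    rw [hgq]
    have h1 := fact_ne a
    have h2 := fact_ne b
    have h3 := fact_ne c
    have h5 := fact_ne u
    have h4 : ((c : ℚ) + 1) ≠ 0 := by positivity
    have h6 : ((a : ℚ) + 1) ≠ 0 := by positivity
    field_simp
    ring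

/-- expansion of the first operator applied to `Rpoly`. -/
lemma expandA (g d l k m : ℕ) :
    -(X 0 * pderiv 0 (pderiv 0 (Rpoly g l k m)))
        + ((g : ℚ) + 2 * (d : ℚ) - 1 - (l : ℚ)) • pderiv 0 (Rpoly g l k m)
        - 2 * (X 2 * pderiv 0 (pderiv 2 (Rpoly g l k m)))
        + (1 / 2 : ℚ) • (X 1 * X 2 * pderiv 2 (pderiv 2 (Rpoly g l k m)))
        - (((g : ℚ) - (l : ℚ)) / 2) • (X 1 * pderiv 2 (Rpoly g l k m))
      = ∑ t ∈ S g l k m,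
          (monomial (e (t.1-1) t.2.1 t.2.2)
              (co g l t * t.1 * (((g : ℚ) + 2 * (d : ℚ) - 1 - (l : ℚ)) - (t.1:ℚ) + 1 - 2*t.2.2))
            + monomial (e t.1 (t.2.1+1) (t.2.2-1))
              (co g l t * t.2.2 * (((t.2.2:ℚ) - 1)/2 - ((g:ℚ) - (l:ℚ))/2))) := by
  rw [Rpoly_eq]
  simp only [map_sum, Finset.mul_sum, Finset.smul_sum, ← Finset.sum_neg_distrib,
    ← Finset.sum_add_distrib, ← Finset.sum_sub_distrib]
  exact Finset.sum_congr rfl fun t _ => opA_mono _ _ t.1 t.2.1 t.2.2 (co g l t)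

/-- expansion of the second operator applied to `Rpoly`. -/
lemma expandB (g d l k m : ℕ) :
    -(X 1 * pderiv 1 (pderiv 1 (Rpoly g l k m)))
        + ((g : ℚ) + 2 * (d : ℚ) - 1 - (l : ℚ)) • pderiv 1 (Rpoly g l k m)
        - 2 * (X 2 * pderiv 1 (pderiv 2 (Rpoly g l k m)))
        + (1 / 2 : ℚ) • (X 0 * X 2 * pderiv 2 (pderiv 2 (Rpoly g l k m)))
        - (((g : ℚ) - (l : ℚ)) / 2) • (X 0 * pderiv 2 (Rpoly g l k m))
      = ∑ t ∈ S g l k m,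
          (monomial (e t.1 (t.2.1-1) t.2.2)
              (co g l t * t.2.1 * (((g : ℚ) + 2 * (d : ℚ) - 1 - (l : ℚ)) - (t.2.1:ℚ) + 1 - 2*t.2.2))
            + monomial (e (t.1+1) t.2.1 (t.2.2-1))
              (co g l t * t.2.2 * (((t.2.2:ℚ) - 1)/2 - ((g:ℚ) - (l:ℚ))/2))) := by
  rw [Rpoly_eq]
  simp only [map_sum, Finset.mul_sum, Finset.smul_sum, ← Finset.sum_neg_distrib,
    ← Finset.sum_add_distrib, ← Finset.sum_sub_distrib]
  exact Finset.sum_congr rfl fun t _ => opB_mono _ _ t.1 t.2.1 t.2.2 (co g l t)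

end Stmt15Aux

open Stmt15Aux in
/-- for integers `g ≥ 2`, `d ≥ 1`, `l, m ≥ 0` with `l + m ≤ g` and every `k`,
the operators
`−α∂²/∂α² + (g+2d−1−l)∂/∂α − 2γ∂²/∂α∂γ + (1/2)βγ∂²/∂γ² − ((g−l)/2)β∂/∂γ` and
`−β∂²/∂β² + (g+2d−1−l)∂/∂β − 2γ∂²/∂β∂γ + (1/2)αγ∂²/∂γ² − ((g−l)/2)α∂/∂γ`
send `R_{k,m,l}` to `(2g+2d−k)·R_{k−1,m,l}` and `(2g+2d−k)·R_{k−1,m−1,l}` respectively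
(the latter being `0` when `m = 0`). -/
theorem stmt15 (g d l m : ℕ) (hg : 2 ≤ g) (hd : 1 ≤ d) (hlm : l + m ≤ g) (k : ℕ) :
    (-(X 0 * pderiv 0 (pderiv 0 (Rpoly g l k m)))
        + ((g : ℚ) + 2 * (d : ℚ) - 1 - (l : ℚ)) • pderiv 0 (Rpoly g l k m)
        - 2 * (X 2 * pderiv 0 (pderiv 2 (Rpoly g l k m)))
        + (1 / 2 : ℚ) • (X 1 * X 2 * pderiv 2 (pderiv 2 (Rpoly g l k m)))
        - (((g : ℚ) - (l : ℚ)) / 2) • (X 1 * pderiv 2 (Rpoly g l k m))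
      = (2 * (g : ℚ) + 2 * (d : ℚ) - (k : ℚ)) • Rpoly g l (k - 1) m) ∧
    (-(X 1 * pderiv 1 (pderiv 1 (Rpoly g l k m)))
        + ((g : ℚ) + 2 * (d : ℚ) - 1 - (l : ℚ)) • pderiv 1 (Rpoly g l k m)
        - 2 * (X 2 * pderiv 1 (pderiv 2 (Rpoly g l k m)))
        + (1 / 2 : ℚ) • (X 0 * X 2 * pderiv 2 (pderiv 2 (Rpoly g l k m)))
        - (((g : ℚ) - (l : ℚ)) / 2) • (X 0 * pderiv 2 (Rpoly g l k m))
      = (2 * (g : ℚ) + 2 * (d : ℚ) - (k : ℚ)) •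
          (if m = 0 then 0 else Rpoly g l (k - 1) (m - 1))) := by
  have hR : ∀ k' m', Rpoly g l k' m' = ∑ t ∈ S g l k' m', monomial (e t.1 t.2.1 t.2.2) (co g l t) :=
    fun k' m' => Rpoly_eq g l k' m'
  constructor
  · rw [expandA g d l k m, Finset.sum_add_distrib,
      sumA g l k m hg ((g : ℚ) + 2 * (d : ℚ) - 1 - (l : ℚ)),
      sumB g l k m hg hlm, ← Finset.sum_add_distrib, hR (k-1) m, Finset.smul_sum]
    refine Finset.sum_congr rfl fun t ht => ?_
    rw [smul_monomial, ← map_add]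
    congr 1
    rw [mem_S] at ht
    obtain ⟨a, b, c⟩ := t
    obtain ⟨h1, h2⟩ := ht
    simp only [] at h1 h2
    have hk : a + b + 2 * c + g + l + 1 = k := by omega
    have hq : (a : ℚ) + b + 2 * c + g + l + 1 = k := by exact_mod_cast congrArg (Nat.cast : ℕ → ℚ) hk
    simp only [smul_eq_mul]
    linear_combination (-(co g l (a, b, c))) * hq
  · rcases Nat.eq_zero_or_pos m with hm | hm
    · subst hm
      rw [if_pos rfl, smul_zero]
      rw [expandB g d l k 0]
      apply Finset.sum_eq_zero
      intro t ht
      rw [mem_S] at ht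
      have hb : t.2.1 = 0 := by omega
      have hc : t.2.2 = 0 := by omega
      rw [hb, hc]
      simp
    · rw [if_neg (by omega), expandB g d l k m, Finset.sum_add_distrib,
        sumA' g l k m hg hm ((g : ℚ) + 2 * (d : ℚ) - 1 - (l : ℚ)),
        sumB' g l k m hg hm hlm, ← Finset.sum_add_distrib, hR (k-1) (m-1), Finset.smul_sum]
      refine Finset.sum_congr rfl fun t ht => ?_
      rw [smul_monomial, ← map_add]
      congr 1
      rw [mem_S] at ht
      obtain ⟨a, b, c⟩ := t
      obtain ⟨h1, h2⟩ := ht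
      simp only [] at h1 h2
      have hk : a + b + 2 * c + g + l + 1 = k := by omega
      have hq : (a : ℚ) + b + 2 * c + g + l + 1 = k := by exact_mod_cast congrArg (Nat.cast : ℕ → ℚ) hk
      simp only [smul_eq_mul]
      linear_combination (-(co g l (a, b, c))) * hq

end
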